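/- Let Σ = {1,2,3,⊥} and let ε, γ be reals with 0 ≤ ε, γ ≤ 0.001. Let w : Σ³ → ℝ satisfy: 0 ≤ w(α) ≤ 1 for all α ∈ Σ³; ∑_{α ∈ Σ³} w(α) = 1; for every coordinate k ∈ {1,2,3} and every color σ ∈ {1,2,3}, ∑_{α : α_k = σ} w(α) ≤ 1/2 + γ; for every coordinate k ∈ {1,2,3}, ∑_{α : α_k = ⊥} w(α) ≤ ε; and for every pair 1 ≤ i < j ≤ 3, ∑_{π ∈ Sym({1,2,3})} w(S_π^{(ij)})² ≥ 1 − γ. Then there exist a pair i < j and a permutation π of {1,2,3} such that w(S_π^{(ij)}) ≥ 1/2 + γ. -/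

import Mathlib

open Finset

/-- For coordinates `i j` and a permutation `π` of the three colors, the set of
strings `α ∈ Σ³` (with `Σ = {1,2,3,⊥}` modeled as `Option (Fin 3)`) such that
`α i` is a color and `α j = π (α i)`. -/
def Spair (i j : Fin 3) (π : Equiv.Perm (Fin 3)) : Finset (Fin 3 → Option (Fin 3)) :=
  Finset.univ.filter (fun α : Fin 3 → Option (Fin 3) =>
    ∃ σ : Fin 3, α i = some σ ∧ α j = some (π σ))

namespace TwentySeven

abbrev Z3 := Fin 3
abbrev Atom := Fin 3 → Option (Fin 3)

def shiftP (d : Z3) : Equiv.Perm Z3 := Equiv.addLeft d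

def LL (e1 e12 a : Z3) : Atom := ![some a, some (e1+a), some (e12+a)]

lemma LL0 (e1 e12 a : Z3) : LL e1 e12 a 0 = some a := rfl
lemma LL1 (e1 e12 a : Z3) : LL e1 e12 a 1 = some (e1+a) := rfl
lemma LL2 (e1 e12 a : Z3) : LL e1 e12 a 2 = some (e12+a) := rfl

lemma LLinj {e1 e12 a e1' e12' a' : Z3} (h : LL e1 e12 a = LL e1' e12' a') :
    e1 = e1' ∧ e12 = e12' ∧ a = a' := by
  have h0 := congrFun h 0
  have h1 := congrFun h 1
  have h2 := congrFun h 2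
  rw [LL0, LL0] at h0
  rw [LL1, LL1] at h1
  rw [LL2, LL2] at h2
  have ha : a = a' := Option.some.inj h0
  subst ha
  exact ⟨add_right_cancel (Option.some.inj h1), add_right_cancel (Option.some.inj h2), rfl⟩

lemma mem_Spair {i j : Fin 3} {π : Equiv.Perm Z3} {α : Atom} :
    α ∈ Spair i j π ↔ ∃ σ : Z3, α i = some σ ∧ α j = some (π σ) := by
  simp [Spair]

lemma mem_Spair_some {i j : Fin 3} {π : Equiv.Perm Z3} {x y : Z3} {α : Atom}
    (hx : α i = some x) (hy : α j = some y) :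
    α ∈ Spair i j π ↔ π x = y := by
  rw [mem_Spair]
  constructor
  · rintro ⟨σ, h1, h2⟩
    rw [hx] at h1; rw [hy] at h2
    cases Option.some.inj h1
    exact (Option.some.inj h2).symm
  · intro h; exact ⟨x, hx, by rw [hy, h]⟩

/-- counting double sums -/
lemma sum_sets {ι : Type*} [Fintype ι] (P : ι → Atom → Prop) [∀ i, DecidablePred (P i)]
    (w : Atom → ℝ) :
    ∑ i : ι, ∑ α ∈ univ.filter (P i), w α
      = ∑ α : Atom, ((univ.filter (fun i => P i α)).card : ℝ) * w α := by
  simp only [sum_filter]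
  rw [Finset.sum_comm]
  refine Finset.sum_congr rfl (fun α _ => ?_)
  rw [← Finset.sum_filter, Finset.sum_const, nsmul_eq_mul]

lemma permCard (x1 y1 x2 y2 : Z3) :
    ((univ : Finset (Equiv.Perm Z3)).filter (fun π => π x1 = y1 ∧ π x2 = y2)).card
      = if x1 = x2 then (if y1 = y2 then 2 else 0) else (if y1 = y2 then 0 else 1) := by
  revert x1 y1 x2 y2; decide

lemma permCard1 (x y : Z3) :
    ((univ : Finset (Equiv.Perm Z3)).filter (fun π => π x = y)).card = 2 := by
  revert x y; decide

lemma atom_perm_count_le (i j : Fin 3) (α : Atom) :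
    ((univ : Finset (Equiv.Perm Z3)).filter (fun π => α ∈ Spair i j π)).card ≤ 2 := by
  rcases hx : α i with _ | x
  · have : (univ : Finset (Equiv.Perm Z3)).filter (fun π => α ∈ Spair i j π) = ∅ := by
      refine Finset.filter_eq_empty_iff.mpr (fun π _ => ?_)
      rw [mem_Spair]; rintro ⟨σ, h1, _⟩; rw [hx] at h1; cases h1
    simp [this]
  · rcases hy : α j with _ | y
    · have : (univ : Finset (Equiv.Perm Z3)).filter (fun π => α ∈ Spair i j π) = ∅ := by
        refine Finset.filter_eq_empty_iff.mpr (fun π _ => ?_)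
        rw [mem_Spair]; rintro ⟨σ, _, h2⟩; rw [hy] at h2; cases h2
      simp [this]
    · have : (univ : Finset (Equiv.Perm Z3)).filter (fun π => α ∈ Spair i j π)
          = (univ : Finset (Equiv.Perm Z3)).filter (fun π => π x = y) := by
        refine Finset.filter_congr (fun π _ => ?_)
        simp [mem_Spair_some hx hy]
      rw [this, permCard1]

lemma atom_shift_count_le (i j : Fin 3) (α : Atom) :
    ((univ : Finset Z3).filter (fun d => α ∈ Spair i j (shiftP d))).card ≤ 1 := by
  refine Finset.card_le_one.mpr (fun d hd d' hd' => ?_)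
  rw [Finset.mem_filter, mem_Spair] at hd hd'
  obtain ⟨_, σ, h1, h2⟩ := hd
  obtain ⟨_, σ', h1', h2'⟩ := hd'
  rw [h1] at h1'; cases Option.some.inj h1'
  rw [h2] at h2'
  have := Option.some.inj h2'
  simpa [shiftP] using this

/-! ### decidable combinatorial facts -/

lemma z3_triple : ∀ δ : Z3, δ + (δ + δ) = 0 := by decide

lemma z3_cover : ∀ δ a b : Z3, δ ≠ 0 → b = a ∨ b = δ + a ∨ b = δ + (δ + a) := by decide

def Gd (lo1 lo2 lo3 : Z3) (x : Z3 × Z3) : Prop := x.1 ≠ lo1 ∧ x.2 - x.1 ≠ lo2 ∧ x.2 ≠ lo3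

def sh (p q : Z3 × Z3) : Prop := p.1 = q.1 ∨ p.2 = q.2 ∨ p.2 - p.1 = q.2 - q.1

instance (l1 l2 l3 : Z3) : DecidablePred (Gd l1 l2 l3) := fun x => by unfold Gd; infer_instance
instance (p q : Z3 × Z3) : Decidable (sh p q) := by unfold sh; infer_instance

theorem claim_structure : ∀ lo1 lo2 lo3 : Z3,
    (∃ p q r : Z3 × Z3, p ≠ q ∧ p ≠ r ∧ q ≠ r ∧ sh p q ∧ sh p r ∧ sh q r ∧
        ∀ x : Z3 × Z3, Gd lo1 lo2 lo3 x → x = p ∨ x = q ∨ x = r) ∨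
    (∃ e1 e12 δ : Z3, δ ≠ 0 ∧ ∀ x : Z3 × Z3, Gd lo1 lo2 lo3 x →
        x = (e1, e12) ∨ x = (δ + e1, δ + (δ + e12))) := by decide

lemma crossN01 : ∀ δ e1 a b : Z3, δ ≠ 0 →
    ((univ : Finset (Equiv.Perm Z3)).filter
      (fun π => π a = e1 + a ∧ π b = (δ + e1) + b)).card
      = if b = δ + a then 1 else 0 := by decide

lemma crossN12 : ∀ δ e1 e12 a b : Z3, δ ≠ 0 →
    ((univ : Finset (Equiv.Perm Z3)).filter
      (fun π => π (e1 + a) = e12 + a ∧ π ((δ + e1) + b) = (δ + (δ + e12)) + b)).card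
      = if b = a then 1 else 0 := by decide

lemma crossN02 : ∀ δ e12 a b : Z3, δ ≠ 0 →
    ((univ : Finset (Equiv.Perm Z3)).filter
      (fun π => π a = e12 + a ∧ π b = (δ + (δ + e12)) + b)).card
      = if b = δ + (δ + a) then 1 else 0 := by decide

lemma sum_g_shift (g : Z3 → ℝ) (δ a : Z3) (hδ : δ ≠ 0) :
    g a + g (δ + a) + g (δ + (δ + a)) = ∑ b, g b := by
  have hset : ∀ δ a : Z3, δ ≠ 0 → ({a, δ + a, δ + (δ + a)} : Finset Z3) = univ := by decide
  have d1 : ∀ δ a : Z3, δ ≠ 0 → a ∉ ({δ + a, δ + (δ + a)} : Finset Z3) := by decide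
  have d2 : ∀ δ a : Z3, δ ≠ 0 → (δ + a) ∉ ({δ + (δ + a)} : Finset Z3) := by decide
  rw [← hset δ a hδ, Finset.sum_insert (d1 δ a hδ), Finset.sum_insert (d2 δ a hδ),
    Finset.sum_singleton]
  ring

lemma countAA (p q : Z3 → Z3) (hp : Function.Injective p) (hq : Function.Injective q)
    (a a' : Z3) :
    ((univ : Finset (Equiv.Perm Z3)).filter
      (fun π => π (p a) = q a ∧ π (p a') = q a')).card = if a = a' then 2 else 1 := by
  rw [permCard]
  by_cases h : a = a'
  · simp [h]
  · rw [if_neg (fun hc => h (hp hc)), if_neg (fun hc => h (hq hc)), if_neg h]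

/-! ### generic sum lemmas -/

lemma two_le_sum {f : Z3 → ℝ} (hf : ∀ t, 0 ≤ f t) {s s' : Z3} (hne : s ≠ s') :
    f s + f s' ≤ ∑ t, f t := by
  rw [← Finset.sum_pair hne]
  exact Finset.sum_le_sum_of_subset_of_nonneg (Finset.subset_univ _) (fun t _ _ => hf t)

lemma sum_inj_le {w : Atom → ℝ} (hw0 : ∀ a, 0 ≤ w a) {ι : Type*} [Fintype ι]
    (m : ι → Atom) (hm : Function.Injective m) {i j : Fin 3} {π : Equiv.Perm Z3}
    (hmem : ∀ t, m t ∈ Spair i j π) :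
    ∑ t, w (m t) ≤ ∑ α ∈ Spair i j π, w α := by
  rw [← Finset.sum_image (f := w) (g := m) (fun a _ b _ h => hm h)]
  refine Finset.sum_le_sum_of_subset_of_nonneg ?_ (fun t _ _ => hw0 t)
  intro α hα
  simp only [Finset.mem_image] at hα
  obtain ⟨t, _, rfl⟩ := hα
  exact hmem t

lemma pair_le_marg {w : Atom → ℝ} (hw0 : ∀ a, 0 ≤ w a) {u v : Atom} (hne : u ≠ v)
    {k : Fin 3} {σ : Z3} (hu : u k = some σ) (hv : v k = some σ) :
    w u + w v ≤ ∑ α ∈ univ.filter (fun α : Atom => α k = some σ), w α := by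
  rw [← Finset.sum_pair hne]
  refine Finset.sum_le_sum_of_subset_of_nonneg ?_ (fun t _ _ => hw0 t)
  intro t ht
  rcases Finset.mem_insert.mp ht with rfl | ht
  · exact Finset.mem_filter.mpr ⟨Finset.mem_univ _, hu⟩
  · rw [Finset.mem_singleton] at ht; subst ht
    exact Finset.mem_filter.mpr ⟨Finset.mem_univ _, hv⟩

/-- the residual bound: total over permutations of mass in `Spair` outside `Lset` -/
lemma rsum {w : Atom → ℝ} (hw0 : ∀ a, 0 ≤ w a)
    (hsum : ∑ α : Atom, w α = 1) (i j : Fin 3) (Lset : Finset Atom) :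
    ∑ π : Equiv.Perm Z3, ∑ α ∈ univ.filter (fun α => α ∈ Spair i j π ∧ α ∉ Lset), w α
      ≤ 2 * (1 - ∑ α ∈ Lset, w α) := by
  rw [sum_sets (fun (π : Equiv.Perm Z3) (α : Atom) => α ∈ Spair i j π ∧ α ∉ Lset) w]
  have hpoint : ∀ α : Atom,
      ((univ.filter (fun π : Equiv.Perm Z3 => α ∈ Spair i j π ∧ α ∉ Lset)).card : ℝ) * w α
        ≤ 2 * (if α ∈ Lset then 0 else w α) := by
    intro α
    by_cases hL : α ∈ Lset
    · have : (univ.filter (fun π : Equiv.Perm Z3 => α ∈ Spair i j π ∧ α ∉ Lset)) = ∅ := by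
        refine Finset.filter_eq_empty_iff.mpr (fun π _ => by tauto)
      simp [this, hL]
    · have hsub : (univ.filter (fun π : Equiv.Perm Z3 => α ∈ Spair i j π ∧ α ∉ Lset)).card
          ≤ ((univ : Finset (Equiv.Perm Z3)).filter (fun π => α ∈ Spair i j π)).card := by
        apply Finset.card_le_card
        intro π hπ
        rw [Finset.mem_filter] at hπ ⊢
        exact ⟨hπ.1, hπ.2.1⟩
      have h2 := (hsub.trans (atom_perm_count_le i j α))
      rw [if_neg hL]
      have : ((univ.filter (fun π : Equiv.Perm Z3 => α ∈ Spair i j π ∧ α ∉ Lset)).card : ℝ) ≤ 2 := by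
        exact_mod_cast h2
      nlinarith [hw0 α]
  calc ∑ α : Atom, ((univ.filter (fun π : Equiv.Perm Z3 => α ∈ Spair i j π ∧ α ∉ Lset)).card : ℝ) * w α
      ≤ ∑ α : Atom, 2 * (if α ∈ Lset then 0 else w α) := Finset.sum_le_sum (fun α _ => hpoint α)
    _ = 2 * (1 - ∑ α ∈ Lset, w α) := by
        rw [← Finset.mul_sum]
        congr 1
        have : ∀ α : Atom, (if α ∈ Lset then 0 else w α) = w α - (if α ∈ Lset then w α else 0) := by
          intro α; by_cases h : α ∈ Lset <;> simp [h]
        simp only [this]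
        rw [Finset.sum_sub_distrib, hsum, Finset.sum_ite_mem, Finset.univ_inter]

/-- the master quadratic identity for one pair of coordinates -/
lemma quad_generic (w : Atom → ℝ)
    (u v : Z3 → Atom) (hu : Function.Injective u) (hv : Function.Injective v)
    (huv : ∀ a b, u a ≠ v b)
    (i j : Fin 3) (p q p' q' : Z3 → Z3)
    (hpinj : Function.Injective p) (hqinj : Function.Injective q)
    (hp'inj : Function.Injective p') (hq'inj : Function.Injective q')
    (hup : ∀ a, (u a) i = some (p a)) (huq : ∀ a, (u a) j = some (q a))
    (hvp : ∀ b, (v b) i = some (p' b)) (hvq : ∀ b, (v b) j = some (q' b))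
    (m : Z3 → Z3)
    (hcross : ∀ a b, ((univ : Finset (Equiv.Perm Z3)).filter
        (fun π => π (p a) = q a ∧ π (p' b) = q' b)).card
        = if b = m a then 1 else 0) :
    ∑ π : Equiv.Perm Z3,
        (∑ α ∈ (Spair i j π).filter (· ∈ (univ.image u ∪ univ.image v : Finset Atom)), w α)^2
      = (∑ a, w (u a))^2 + (∑ a, (w (u a))^2)
        + (∑ b, w (v b))^2 + (∑ b, (w (v b))^2)
        + 2 * (∑ a, w (u a) * w (v (m a))) := by
  have hdisj : Disjoint (univ.image u) (univ.image v : Finset Atom) := by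
    rw [Finset.disjoint_left]
    rintro α hα hα'
    simp only [Finset.mem_image] at hα hα'
    obtain ⟨a, _, rfl⟩ := hα
    obtain ⟨b, _, hb⟩ := hα'
    exact huv a b hb.symm
  have hbase : ∀ π : Equiv.Perm Z3,
      ∑ α ∈ (Spair i j π).filter (· ∈ (univ.image u ∪ univ.image v : Finset Atom)), w α
        = (∑ a, if π (p a) = q a then w (u a) else 0)
          + (∑ b, if π (p' b) = q' b then w (v b) else 0) := by
    intro π
    rw [Finset.filter_mem_eq_inter, Finset.inter_comm, ← Finset.filter_mem_eq_inter,
      Finset.filter_union,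
      Finset.sum_union (Finset.disjoint_filter_filter hdisj)]
    congr 1
    · rw [Finset.sum_filter, Finset.sum_image (fun a _ b _ h => hu h)]
      exact Finset.sum_congr rfl fun a _ =>
        if_congr (mem_Spair_some (hup a) (huq a)) rfl rfl
    · rw [Finset.sum_filter, Finset.sum_image (fun a _ b _ h => hv h)]
      exact Finset.sum_congr rfl fun b _ =>
        if_congr (mem_Spair_some (hvp b) (hvq b)) rfl rfl
  have key : ∀ (h1 k1 h2 k2 : Z3 → Z3) (c1 c2 : Z3 → ℝ),
      ∑ π : Equiv.Perm Z3,
          (∑ a, if π (h1 a) = k1 a then c1 a else 0) * (∑ b, if π (h2 b) = k2 b then c2 b else 0)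
        = ∑ a, ∑ b, (((univ : Finset (Equiv.Perm Z3)).filter
            (fun π => π (h1 a) = k1 a ∧ π (h2 b) = k2 b)).card : ℝ) * (c1 a * c2 b) := by
    intro h1 k1 h2 k2 c1 c2
    have step1 : ∀ π : Equiv.Perm Z3,
        (∑ a, if π (h1 a) = k1 a then c1 a else 0) * (∑ b, if π (h2 b) = k2 b then c2 b else 0)
          = ∑ a, ∑ b, (if π (h1 a) = k1 a ∧ π (h2 b) = k2 b then c1 a * c2 b else 0) := by
      intro π
      rw [Finset.sum_mul_sum]
      refine Finset.sum_congr rfl fun a _ => Finset.sum_congr rfl fun b _ => ?_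
      by_cases hP : π (h1 a) = k1 a <;> by_cases hQ : π (h2 b) = k2 b <;> simp [hP, hQ]
    simp only [step1]
    rw [Finset.sum_comm]
    refine Finset.sum_congr rfl fun a _ => ?_
    rw [Finset.sum_comm]
    refine Finset.sum_congr rfl fun b _ => ?_
    rw [← Finset.sum_filter, Finset.sum_const, nsmul_eq_mul]
  have expand : ∀ A B : ℝ, (A + B)^2 = A*A + B*B + 2*(A*B) := fun A B => by ring
  simp only [hbase, expand]
  rw [Finset.sum_add_distrib, Finset.sum_add_distrib, ← Finset.mul_sum]
  rw [key p q p q (fun a => w (u a)) (fun a => w (u a)),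
    key p' q' p' q' (fun b => w (v b)) (fun b => w (v b)),
    key p q p' q' (fun a => w (u a)) (fun b => w (v b))]
  have hAA : ∀ (t s : Z3 → Z3), Function.Injective t → Function.Injective s →
      ∀ c : Z3 → ℝ, (∑ a, ∑ a', (((univ : Finset (Equiv.Perm Z3)).filter
        (fun π => π (t a) = s a ∧ π (t a') = s a')).card : ℝ) * (c a * c a'))
      = (∑ a, c a)^2 + (∑ a, (c a)^2) := by
    intro t s ht hs c
    have hterm : ∀ a a' : Z3, (((univ : Finset (Equiv.Perm Z3)).filter
          (fun π => π (t a) = s a ∧ π (t a') = s a')).card : ℝ) * (c a * c a')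
        = c a * c a' + (if a = a' then c a * c a' else 0) := by
      intro a a'
      rw [countAA t s ht hs]
      by_cases h : a = a' <;> simp [h] <;> ring
    simp only [hterm, Finset.sum_add_distrib]
    congr 1
    · rw [← Finset.sum_mul_sum, pow_two]
    · refine Finset.sum_congr rfl fun a _ => ?_
      rw [Finset.sum_ite_eq]
      simp [pow_two]
  have hAB : (∑ a, ∑ b, (((univ : Finset (Equiv.Perm Z3)).filter
        (fun π => π (p a) = q a ∧ π (p' b) = q' b)).card : ℝ) * (w (u a) * w (v b)))
      = ∑ a, w (u a) * w (v (m a)) := by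
    refine Finset.sum_congr rfl fun a _ => ?_
    have hterm : ∀ b : Z3, (((univ : Finset (Equiv.Perm Z3)).filter
          (fun π => π (p a) = q a ∧ π (p' b) = q' b)).card : ℝ) * (w (u a) * w (v b))
        = if b = m a then w (u a) * w (v b) else 0 := by
      intro b
      rw [hcross a b]
      by_cases h : b = m a <;> simp [h]
    simp only [hterm]
    rw [Finset.sum_ite_eq' univ (m a) (fun b => w (u a) * w (v b))]
    simp
  rw [hAA p q hpinj hqinj (fun a => w (u a)), hAA p' q' hp'inj hq'inj (fun b => w (v b)), hAB]
  ring



/-! ### rows and total mass -/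

lemma row1 {w : Atom → ℝ} (hw0 : ∀ a, 0 ≤ w a) (d : Z3) :
    ∑ s : Z3, ∑ a : Z3, w (LL d s a) ≤ ∑ α ∈ Spair 0 1 (shiftP d), w α := by
  have := sum_inj_le hw0 (ι := Z3 × Z3) (fun t => LL d t.1 t.2)
    (fun t t' h => by
      obtain ⟨-, h2, h3⟩ := LLinj h
      exact Prod.ext h2 h3)
    (i := 0) (j := 1) (π := shiftP d)
    (fun t => (mem_Spair_some (LL0 d t.1 t.2) (LL1 d t.1 t.2)).mpr rfl)
  rwa [Fintype.sum_prod_type] at this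

lemma row2 {w : Atom → ℝ} (hw0 : ∀ a, 0 ≤ w a) (b : Z3) :
    ∑ d : Z3, ∑ a : Z3, w (LL d (b + d) a) ≤ ∑ α ∈ Spair 1 2 (shiftP b), w α := by
  have := sum_inj_le hw0 (ι := Z3 × Z3) (fun t => LL t.1 (b + t.1) t.2)
    (fun t t' h => by
      obtain ⟨h1, -, h3⟩ := LLinj h
      exact Prod.ext h1 h3)
    (i := 1) (j := 2) (π := shiftP b)
    (fun t => (mem_Spair_some (LL1 t.1 (b + t.1) t.2) (LL2 t.1 (b + t.1) t.2)).mpr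
      (add_assoc b t.1 t.2).symm)
  rwa [Fintype.sum_prod_type] at this

lemma row3 {w : Atom → ℝ} (hw0 : ∀ a, 0 ≤ w a) (s : Z3) :
    ∑ d : Z3, ∑ a : Z3, w (LL d s a) ≤ ∑ α ∈ Spair 0 2 (shiftP s), w α := by
  have := sum_inj_le hw0 (ι := Z3 × Z3) (fun t => LL t.1 s t.2)
    (fun t t' h => by
      obtain ⟨h1, -, h3⟩ := LLinj h
      exact Prod.ext h1 h3)
    (i := 0) (j := 2) (π := shiftP s)
    (fun t => (mem_Spair_some (LL0 t.1 s t.2) (LL2 t.1 s t.2)).mpr rfl)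
  rwa [Fintype.sum_prod_type] at this

lemma line_le {w : Atom → ℝ} (hw0 : ∀ a, 0 ≤ w a) (e1 e12 : Z3) :
    ∑ a : Z3, w (LL e1 e12 a) ≤ ∑ α ∈ Spair 0 1 (shiftP e1), w α :=
  sum_inj_le hw0 (ι := Z3) (fun a => LL e1 e12 a)
    (fun a a' h => (LLinj h).2.2)
    (fun a => (mem_Spair_some (LL0 e1 e12 a) (LL1 e1 e12 a)).mpr rfl)

lemma colored_ge {w : Atom → ℝ} (hw0 : ∀ a, 0 ≤ w a) (hsum : ∑ α : Atom, w α = 1)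
    {ε : ℝ} (hbot : ∀ k : Fin 3, ∑ α ∈ univ.filter (fun α : Atom => α k = none), w α ≤ ε) :
    1 - 3*ε ≤ ∑ d : Z3, ∑ s : Z3, ∑ a : Z3, w (LL d s a) := by
  classical
  have htrip : ∑ d : Z3, ∑ s : Z3, ∑ a : Z3, w (LL d s a)
      = ∑ α ∈ univ.filter
          (fun α : Atom => (α 0).isSome ∧ (α 1).isSome ∧ (α 2).isSome), w α := by
    have hinj : ∀ t ∈ (univ : Finset (Z3 × Z3 × Z3)), ∀ t' ∈ univ,
        LL t.1 t.2.1 t.2.2 = LL t'.1 t'.2.1 t'.2.2 → t = t' := by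
      intro t _ t' _ h
      obtain ⟨h1, h2, h3⟩ := LLinj h
      exact Prod.ext h1 (Prod.ext h2 h3)
    have himg : Finset.image (fun t : Z3 × Z3 × Z3 => LL t.1 t.2.1 t.2.2) univ
        = univ.filter (fun α : Atom => (α 0).isSome ∧ (α 1).isSome ∧ (α 2).isSome) := by
      ext α
      simp only [Finset.mem_image, Finset.mem_filter, Finset.mem_univ, true_and]
      constructor
      · rintro ⟨t, rfl⟩
        simp [LL0, LL1, LL2]
      · rintro ⟨h0, h1, h2⟩
        obtain ⟨x, hx⟩ := Option.isSome_iff_exists.mp h0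
        obtain ⟨y, hy⟩ := Option.isSome_iff_exists.mp h1
        obtain ⟨z, hz⟩ := Option.isSome_iff_exists.mp h2
        refine ⟨⟨y - x, z - x, x⟩, ?_⟩
        funext k
        fin_cases k
        · show LL (y - x) (z - x) x 0 = α 0
          rw [LL0, hx]
        · show LL (y - x) (z - x) x 1 = α 1
          rw [LL1, sub_add_cancel, hy]
        · show LL (y - x) (z - x) x 2 = α 2
          rw [LL2, sub_add_cancel, hz]
    rw [← himg, Finset.sum_image hinj, Fintype.sum_prod_type]
    refine Finset.sum_congr rfl fun d _ => ?_
    rw [Fintype.sum_prod_type]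
  have hsplit := Finset.sum_filter_add_sum_filter_not (univ : Finset Atom)
    (fun α : Atom => (α 0).isSome ∧ (α 1).isSome ∧ (α 2).isSome) w
  have hrest : ∑ α ∈ univ.filter
      (fun α : Atom => ¬((α 0).isSome ∧ (α 1).isSome ∧ (α 2).isSome)), w α ≤ 3*ε := by
    have hite : ∀ (α : Atom) (k : Fin 3), 0 ≤ (if α k = none then w α else 0) := by
      intro α k; by_cases hh : α k = none <;> simp [hh, hw0 α]
    have hpt : ∀ α : Atom,
        (if ¬((α 0).isSome ∧ (α 1).isSome ∧ (α 2).isSome) then w α else 0)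
          ≤ (if α 0 = none then w α else 0) + (if α 1 = none then w α else 0)
            + (if α 2 = none then w α else 0) := by
      intro α
      by_cases h : (α 0).isSome ∧ (α 1).isSome ∧ (α 2).isSome
      · rw [if_neg (not_not_intro h)]
        have h0 := hite α 0; have h1 := hite α 1; have h2 := hite α 2
        linarith
      · rw [if_pos h]
        have hcase : α 0 = none ∨ α 1 = none ∨ α 2 = none := by
          by_contra hc
          push_neg at hc
          exact h ⟨Option.ne_none_iff_isSome.mp hc.1, Option.ne_none_iff_isSome.mp hc.2.1,
            Option.ne_none_iff_isSome.mp hc.2.2⟩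
        rcases hcase with hc | hc | hc
        · have h1 := hite α 1; have h2 := hite α 2
          rw [if_pos hc]; linarith
        · have h1 := hite α 0; have h2 := hite α 2
          rw [if_pos hc]; linarith
        · have h1 := hite α 0; have h2 := hite α 1
          rw [if_pos hc]; linarith
    calc ∑ α ∈ univ.filter (fun α : Atom => ¬((α 0).isSome ∧ (α 1).isSome ∧ (α 2).isSome)), w α
        = ∑ α : Atom, (if ¬((α 0).isSome ∧ (α 1).isSome ∧ (α 2).isSome) then w α else 0) :=
          (Finset.sum_filter _ _)
      _ ≤ ∑ α : Atom, ((if α 0 = none then w α else 0) + (if α 1 = none then w α else 0)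
            + (if α 2 = none then w α else 0)) := Finset.sum_le_sum (fun α _ => hpt α)
      _ = (∑ α : Atom, if α 0 = none then w α else 0)
          + (∑ α : Atom, if α 1 = none then w α else 0)
          + (∑ α : Atom, if α 2 = none then w α else 0) := by
            rw [Finset.sum_add_distrib, Finset.sum_add_distrib]
      _ ≤ 3*ε := by
            rw [← Finset.sum_filter, ← Finset.sum_filter, ← Finset.sum_filter]
            have b0 := hbot 0; have b1 := hbot 1; have b2 := hbot 2
            linarith
  rw [htrip]
  linarith [hsplit, hrest, hsum.le, hsum.ge]


lemma step_sq {B R X c' : ℝ} (hBR : B + R = X) (hB : 0 ≤ B) (hR : 0 ≤ R) (hX : X ≤ c') :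
    X^2 ≤ B^2 + (2*c') * R := by
  nlinarith [mul_le_mul_of_nonneg_left hX hR, mul_nonneg hB hR, mul_nonneg hR hR]

lemma aux_sq {x c : ℝ} (h0 : 0 ≤ x) (h1 : x ≤ c) : x^2 ≤ c^2 := by nlinarith

set_option maxHeartbeats 3000000 in
lemma final_numeric {γ ε F G Sf Sg Mf Mg C1 C2 C3 : ℝ}
    (hγ0 : 0 ≤ γ) (hγ1 : γ ≤ 0.001) (hε0 : 0 ≤ ε) (hε1 : ε ≤ 0.001)
    (hin1 : 1 - γ ≤ F^2 + Sf + G^2 + Sg + 2*C1 + 2*(1/2+γ) * (2*(1 - (F+G))))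
    (hin2 : 1 - γ ≤ F^2 + Sf + G^2 + Sg + 2*C2 + 2*(1/2+γ) * (2*(1 - (F+G))))
    (hin3 : 1 - γ ≤ F^2 + Sf + G^2 + Sg + 2*C3 + 2*(1/2+γ) * (2*(1 - (F+G))))
    (hcr : C1 + C2 + C3 = F*G)
    (hSf : Sf ≤ F*Mf) (hSg : Sg ≤ G*Mg) (hMf0 : 0 ≤ Mf) (hMg0 : 0 ≤ Mg)
    (hMfg : Mf + Mg ≤ 1/2+γ) (hFle : F ≤ 1/2+γ) (hGle : G ≤ 1/2+γ)
    (hF0 : 0 ≤ F) (hG0 : 0 ≤ G) (hFG1 : F + G ≤ 1) (hRB : 1 - (F+G) ≤ 3*ε + 21*γ) :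
    False := by
  have hA1 : F^2 ≤ (1/2+γ)^2 := aux_sq hF0 hFle
  have hA2 : G^2 ≤ (1/2+γ)^2 := aux_sq hG0 hGle
  have hB : Sf + Sg ≤ (1/2+γ)^2 := by
    have b1 := mul_le_mul_of_nonneg_right hFle hMf0
    have b2 := mul_le_mul_of_nonneg_right hGle hMg0
    have b3 := mul_le_mul_of_nonneg_left hMfg (by linarith : (0:ℝ) ≤ 1/2+γ)
    have b4 : (1/2+γ) * (Mf + Mg) = (1/2+γ)*Mf + (1/2+γ)*Mg := by ring
    have b5 : (1/2+γ) * (1/2+γ) = (1/2+γ)^2 := by ring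
    linarith
  have hC : 2*(F*G) ≤ 1/2 := by
    have c1 : (F+G)^2 ≤ 1^2 := aux_sq (by linarith) hFG1
    have c2 := sq_nonneg (F-G)
    have c3 : (F+G)^2 = F^2 + 2*(F*G) + G^2 := by ring
    have c4 : (F-G)^2 = F^2 - 2*(F*G) + G^2 := by ring
    nlinarith [c1, c2]
  have hD : 2*(1/2+γ) * (2*(1 - (F+G))) ≤ 2*(1/2+γ) * (2*(3*ε + 21*γ)) := by
    have h2 : 2*(1 - (F+G)) ≤ 2*(3*ε + 21*γ) := by linarith
    exact mul_le_mul_of_nonneg_left h2 (by linarith)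
  have hsum3 : 3 - 3*γ ≤ (3*F^2 + 3*G^2) + 3*(Sf+Sg) + 2*(F*G)
      + 3*(2*(1/2+γ) * (2*(1 - (F+G)))) := by linarith [hin1, hin2, hin3, hcr]
  have hstep : 3 - 3*γ ≤ 9*(1/2+γ)^2 + 1/2 + 3*(2*(1/2+γ) * (2*(3*ε + 21*γ))) := by
    linarith [hsum3, hA1, hA2, hB, hC, hD]
  have hsq : γ*γ ≤ 0.001*γ := mul_le_mul_of_nonneg_right hγ1 hγ0
  have hge : γ*ε ≤ 0.001*γ := by
    have h := mul_le_mul_of_nonneg_left hε1 hγ0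
    linarith
  have hexp : 9*(1/2+γ)^2 + 1/2 + 3*(2*(1/2+γ) * (2*(3*ε + 21*γ)))
      = 11/4 + 135*γ + 9*(γ*γ) + 18*ε + 36*(γ*ε) + 252*(γ*γ) := by ring
  rw [hexp] at hstep
  linarith [hstep, hsq, hge]

end TwentySeven


open TwentySeven

set_option maxHeartbeats 2000000

theorem twentyseven_variable_lemma
    (ε γ : ℝ) (hε0 : 0 ≤ ε) (hε1 : ε ≤ 0.001) (hγ0 : 0 ≤ γ) (hγ1 : γ ≤ 0.001)
    (w : (Fin 3 → Option (Fin 3)) → ℝ)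
    (hw0 : ∀ α, 0 ≤ w α) (hw1 : ∀ α, w α ≤ 1)
    (hsum : ∑ α : Fin 3 → Option (Fin 3), w α = 1)
    (hcolor : ∀ k : Fin 3, ∀ σ : Fin 3,
      ∑ α ∈ Finset.univ.filter (fun α : Fin 3 → Option (Fin 3) => α k = some σ), w α
        ≤ 1/2 + γ)
    (hbot : ∀ k : Fin 3,
      ∑ α ∈ Finset.univ.filter (fun α : Fin 3 → Option (Fin 3) => α k = none), w α ≤ ε)
    (hpair : ∀ i j : Fin 3, i < j →
      1 - γ ≤ ∑ π : Equiv.Perm (Fin 3), (∑ α ∈ Spair i j π, w α)^2) :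
    ∃ i j : Fin 3, i < j ∧ ∃ π : Equiv.Perm (Fin 3),
      1/2 + γ ≤ ∑ α ∈ Spair i j π, w α := by
  classical
  by_contra hcon
  push_neg at hcon
  have h01 : (0 : Fin 3) < 1 := by decide
  have h12 : (1 : Fin 3) < 2 := by decide
  have h02 : (0 : Fin 3) < 2 := by decide
  have hx0 : ∀ (i j : Fin 3) (π : Equiv.Perm (Fin 3)), 0 ≤ ∑ α ∈ Spair i j π, w α :=
    fun i j π => Finset.sum_nonneg (fun α _ => hw0 α)
  have hxle : ∀ (i j : Fin 3), i < j → ∀ π : Equiv.Perm (Fin 3),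
      ∑ α ∈ Spair i j π, w α ≤ 1/2 + γ := fun i j h π => (hcon i j h π).le
  -- the total mass over all perms of one pair is at most 2
  have hsx2 : ∀ i j : Fin 3, ∑ π : Equiv.Perm (Fin 3), ∑ α ∈ Spair i j π, w α ≤ 2 := by
    intro i j
    have hrw : ∀ π : Equiv.Perm (Fin 3),
        Spair i j π = univ.filter (fun α => α ∈ Spair i j π) := by
      intro π; ext α; simp
    calc ∑ π : Equiv.Perm (Fin 3), ∑ α ∈ Spair i j π, w α
        = ∑ π : Equiv.Perm (Fin 3), ∑ α ∈ univ.filter (fun α => α ∈ Spair i j π), w α :=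
          Finset.sum_congr rfl fun π _ => by rw [← hrw π]
      _ = ∑ α : Atom, (((univ.filter
            (fun π : Equiv.Perm (Fin 3) => α ∈ Spair i j π))).card : ℝ) * w α :=
          sum_sets _ w
      _ ≤ ∑ α : Atom, 2 * w α := by
          refine Finset.sum_le_sum fun α _ => ?_
          have h2 : ((univ.filter (fun π : Equiv.Perm (Fin 3) => α ∈ Spair i j π)).card : ℝ)
              ≤ 2 := by exact_mod_cast atom_perm_count_le i j α
          nlinarith [hw0 α]
      _ = 2 := by rw [← Finset.mul_sum, hsum, mul_one]
  -- extraction of the light difference for each pair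
  have getlo : ∀ i j : Fin 3, i < j → ∃ lo : Fin 3,
      ∑ α ∈ Spair i j (shiftP lo), w α ≤ 7*γ := by
    intro i j hij
    have hsumE : ∑ d : Fin 3, ∑ α ∈ Spair i j (shiftP d), w α ≤ 1 := by
      have hrw : ∀ d : Fin 3,
          Spair i j (shiftP d) = univ.filter (fun α => α ∈ Spair i j (shiftP d)) := by
        intro d; ext α; simp
      calc ∑ d : Fin 3, ∑ α ∈ Spair i j (shiftP d), w α
          = ∑ d : Fin 3, ∑ α ∈ univ.filter (fun α => α ∈ Spair i j (shiftP d)), w α :=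
            Finset.sum_congr rfl fun d _ => by rw [← hrw d]
        _ = ∑ α : Atom, (((univ.filter
              (fun d : Fin 3 => α ∈ Spair i j (shiftP d)))).card : ℝ) * w α :=
            sum_sets _ w
        _ ≤ ∑ α : Atom, 1 * w α := by
            refine Finset.sum_le_sum fun α _ => ?_
            have h2 : ((univ.filter (fun d : Fin 3 => α ∈ Spair i j (shiftP d))).card : ℝ)
                ≤ 1 := by exact_mod_cast atom_shift_count_le i j α
            nlinarith [hw0 α]
        _ = 1 := by rw [← Finset.mul_sum, hsum, mul_one]
    obtain ⟨lo, -, hmin⟩ := Finset.exists_min_image univ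
      (fun d : Fin 3 => ∑ α ∈ Spair i j (shiftP d), w α) ⟨0, Finset.mem_univ 0⟩
    have h3 : ∑ d : Fin 3, ∑ α ∈ Spair i j (shiftP d), w α
        = (∑ α ∈ Spair i j (shiftP 0), w α) + (∑ α ∈ Spair i j (shiftP 1), w α)
          + (∑ α ∈ Spair i j (shiftP 2), w α) :=
      Fin.sum_univ_three _
    have h13 : ∑ α ∈ Spair i j (shiftP lo), w α ≤ 1/3 := by
      have m0 := hmin 0 (Finset.mem_univ _)
      have m1 := hmin 1 (Finset.mem_univ _)
      have m2 := hmin 2 (Finset.mem_univ _)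
      linarith
    have hslack : ∑ π : Equiv.Perm (Fin 3),
        (∑ α ∈ Spair i j π, w α) * ((1/2+γ) - ∑ α ∈ Spair i j π, w α) ≤ 3*γ := by
      have h1 := hpair i j hij
      have h2 := hsx2 i j
      have expand : ∑ π : Equiv.Perm (Fin 3),
          (∑ α ∈ Spair i j π, w α) * ((1/2+γ) - ∑ α ∈ Spair i j π, w α)
          = (1/2+γ) * (∑ π : Equiv.Perm (Fin 3), ∑ α ∈ Spair i j π, w α)
            - ∑ π : Equiv.Perm (Fin 3), (∑ α ∈ Spair i j π, w α)^2 := by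
        rw [Finset.mul_sum, ← Finset.sum_sub_distrib]
        exact Finset.sum_congr rfl fun π _ => by ring
      rw [expand]
      nlinarith [hγ0]
    have hterm : (∑ α ∈ Spair i j (shiftP lo), w α)
        * ((1/2+γ) - ∑ α ∈ Spair i j (shiftP lo), w α) ≤ 3*γ := by
      refine le_trans ?_ hslack
      refine Finset.single_le_sum (f := fun π : Equiv.Perm (Fin 3) =>
        (∑ α ∈ Spair i j π, w α) * ((1/2+γ) - ∑ α ∈ Spair i j π, w α)) ?_
        (Finset.mem_univ (shiftP lo))
      intro π _
      have ha := hxle i j hij π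
      have hb := hx0 i j π
      nlinarith
    refine ⟨lo, ?_⟩
    have h18 : ∑ α ∈ Spair i j (shiftP lo), w α ≤ 18*γ := by
      nlinarith [hx0 i j (shiftP lo), hγ0, hγ1, hterm, h13]
    nlinarith [hx0 i j (shiftP lo), hγ0, hγ1, hterm, h18]
  obtain ⟨lo1, hlo1⟩ := getlo 0 1 h01
  obtain ⟨lo2, hlo2⟩ := getlo 1 2 h12
  obtain ⟨lo3, hlo3⟩ := getlo 0 2 h02
  -- cell mass facts
  have hμ0 : ∀ d s : Fin 3, 0 ≤ ∑ a : Fin 3, w (LL d s a) :=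
    fun d s => Finset.sum_nonneg (fun a _ => hw0 _)
  have hrow1c : ∀ d : Fin 3, ∑ s : Fin 3, ∑ a : Fin 3, w (LL d s a) ≤ 1/2 + γ :=
    fun d => (row1 hw0 d).trans (hxle 0 1 h01 _)
  have hrow2c : ∀ b : Fin 3, ∑ d : Fin 3, ∑ a : Fin 3, w (LL d (b + d) a) ≤ 1/2 + γ :=
    fun b => (row2 hw0 b).trans (hxle 1 2 h12 _)
  have hrow3c : ∀ s : Fin 3, ∑ d : Fin 3, ∑ a : Fin 3, w (LL d s a) ≤ 1/2 + γ :=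
    fun s => (row3 hw0 s).trans (hxle 0 2 h02 _)
  have hrow1lo : ∑ s : Fin 3, ∑ a : Fin 3, w (LL lo1 s a) ≤ 7*γ :=
    (row1 hw0 lo1).trans hlo1
  have hrow2lo : ∑ d : Fin 3, ∑ a : Fin 3, w (LL d (lo2 + d) a) ≤ 7*γ :=
    (row2 hw0 lo2).trans hlo2
  have hrow3lo : ∑ d : Fin 3, ∑ a : Fin 3, w (LL d lo3 a) ≤ 7*γ :=
    (row3 hw0 lo3).trans hlo3
  -- total colored mass
  have htotμ : 1 - 3*ε ≤ ∑ x : Fin 3 × Fin 3, ∑ a : Fin 3, w (LL x.1 x.2 a) := by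
    have := colored_ge hw0 hsum hbot
    rwa [Fintype.sum_prod_type]
  -- split into good and bad cells
  have hsplitμ : ∑ x : Fin 3 × Fin 3, (∑ a : Fin 3, w (LL x.1 x.2 a))
      = (∑ x : Fin 3 × Fin 3, if Gd lo1 lo2 lo3 x then (∑ a : Fin 3, w (LL x.1 x.2 a)) else 0)
        + (∑ x : Fin 3 × Fin 3,
            if ¬ Gd lo1 lo2 lo3 x then (∑ a : Fin 3, w (LL x.1 x.2 a)) else 0) := by
    rw [← Finset.sum_add_distrib]
    exact Finset.sum_congr rfl fun x _ => by
      by_cases h : Gd lo1 lo2 lo3 x <;> simp [h]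
  have hite0 : ∀ (P : Prop) (inst : Decidable P) (d s : Fin 3),
      (0:ℝ) ≤ if P then (∑ a : Fin 3, w (LL d s a)) else 0 := by
    intro P inst d s
    split
    · exact hμ0 d s
    · exact le_rfl
  have hbad : (∑ x : Fin 3 × Fin 3,
      if ¬ Gd lo1 lo2 lo3 x then (∑ a : Fin 3, w (LL x.1 x.2 a)) else 0) ≤ 21*γ := by
    have hpt : ∀ x : Fin 3 × Fin 3,
        (if ¬ Gd lo1 lo2 lo3 x then (∑ a : Fin 3, w (LL x.1 x.2 a)) else 0)
          ≤ (if x.1 = lo1 then (∑ a : Fin 3, w (LL x.1 x.2 a)) else 0)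
            + (if x.2 - x.1 = lo2 then (∑ a : Fin 3, w (LL x.1 x.2 a)) else 0)
            + (if x.2 = lo3 then (∑ a : Fin 3, w (LL x.1 x.2 a)) else 0) := by
      intro x
      by_cases h : Gd lo1 lo2 lo3 x
      · rw [if_neg (not_not_intro h)]
        have t1 := hite0 (x.1 = lo1) inferInstance x.1 x.2
        have t2 := hite0 (x.2 - x.1 = lo2) inferInstance x.1 x.2
        have t3 := hite0 (x.2 = lo3) inferInstance x.1 x.2
        linarith
      · rw [if_pos h]
        have hcase : x.1 = lo1 ∨ x.2 - x.1 = lo2 ∨ x.2 = lo3 := by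
          by_contra hc
          push_neg at hc
          exact h ⟨hc.1, hc.2.1, hc.2.2⟩
        rcases hcase with hc | hc | hc
        · have t2 := hite0 (x.2 - x.1 = lo2) inferInstance x.1 x.2
          have t3 := hite0 (x.2 = lo3) inferInstance x.1 x.2
          rw [if_pos hc]; linarith
        · have t1 := hite0 (x.1 = lo1) inferInstance x.1 x.2
          have t3 := hite0 (x.2 = lo3) inferInstance x.1 x.2
          rw [if_pos hc]; linarith
        · have t1 := hite0 (x.1 = lo1) inferInstance x.1 x.2
          have t2 := hite0 (x.2 - x.1 = lo2) inferInstance x.1 x.2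
          rw [if_pos hc]; linarith
    have hT1 : ∑ x : Fin 3 × Fin 3, (if x.1 = lo1 then (∑ a : Fin 3, w (LL x.1 x.2 a)) else 0)
        = ∑ s : Fin 3, ∑ a : Fin 3, w (LL lo1 s a) := by
      rw [Fintype.sum_prod_type]
      have hinner : ∀ d : Fin 3,
          ∑ s : Fin 3, (if d = lo1 then (∑ a : Fin 3, w (LL d s a)) else 0)
            = if d = lo1 then (∑ s : Fin 3, ∑ a : Fin 3, w (LL d s a)) else 0 := by
        intro d; by_cases h : d = lo1 <;> simp [h]
      simp only [hinner]
      rw [Finset.sum_ite_eq' univ lo1 (fun d => ∑ s : Fin 3, ∑ a : Fin 3, w (LL d s a))]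
      simp
    have hT2 : ∑ x : Fin 3 × Fin 3,
        (if x.2 - x.1 = lo2 then (∑ a : Fin 3, w (LL x.1 x.2 a)) else 0)
        = ∑ d : Fin 3, ∑ a : Fin 3, w (LL d (lo2 + d) a) := by
      rw [Fintype.sum_prod_type]
      refine Finset.sum_congr rfl fun d _ => ?_
      have hcongr : ∀ s : Fin 3,
          (if s - d = lo2 then (∑ a : Fin 3, w (LL d s a)) else 0)
            = if s = lo2 + d then (∑ a : Fin 3, w (LL d s a)) else 0 := by
        intro s
        exact if_congr sub_eq_iff_eq_add rfl rfl
      simp only [hcongr]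
      rw [Finset.sum_ite_eq' univ (lo2 + d) (fun s => ∑ a : Fin 3, w (LL d s a))]
      simp
    have hT3 : ∑ x : Fin 3 × Fin 3, (if x.2 = lo3 then (∑ a : Fin 3, w (LL x.1 x.2 a)) else 0)
        = ∑ d : Fin 3, ∑ a : Fin 3, w (LL d lo3 a) := by
      rw [Fintype.sum_prod_type]
      refine Finset.sum_congr rfl fun d _ => ?_
      rw [Finset.sum_ite_eq' univ lo3 (fun s => ∑ a : Fin 3, w (LL d s a))]
      simp
    calc ∑ x : Fin 3 × Fin 3,
        (if ¬ Gd lo1 lo2 lo3 x then (∑ a : Fin 3, w (LL x.1 x.2 a)) else 0)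
        ≤ ∑ x : Fin 3 × Fin 3,
            ((if x.1 = lo1 then (∑ a : Fin 3, w (LL x.1 x.2 a)) else 0)
            + (if x.2 - x.1 = lo2 then (∑ a : Fin 3, w (LL x.1 x.2 a)) else 0)
            + (if x.2 = lo3 then (∑ a : Fin 3, w (LL x.1 x.2 a)) else 0)) :=
          Finset.sum_le_sum fun x _ => hpt x
      _ = (∑ x : Fin 3 × Fin 3, (if x.1 = lo1 then (∑ a : Fin 3, w (LL x.1 x.2 a)) else 0))
          + (∑ x : Fin 3 × Fin 3,
              (if x.2 - x.1 = lo2 then (∑ a : Fin 3, w (LL x.1 x.2 a)) else 0))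
          + (∑ x : Fin 3 × Fin 3, (if x.2 = lo3 then (∑ a : Fin 3, w (LL x.1 x.2 a)) else 0)) := by
          rw [Finset.sum_add_distrib, Finset.sum_add_distrib]
      _ ≤ 21*γ := by
          rw [hT1, hT2, hT3]
          linarith [hrow1lo, hrow2lo, hrow3lo]
  -- the share bound
  have hshare : ∀ P Q : Fin 3 × Fin 3, P ≠ Q → sh P Q →
      (∑ a : Fin 3, w (LL P.1 P.2 a)) + (∑ a : Fin 3, w (LL Q.1 Q.2 a)) ≤ 1/2 + γ := by
    intro P Q hne hsh
    rcases hsh with h | h | h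
    · have hne2 : P.2 ≠ Q.2 := fun h2 => hne (Prod.ext h h2)
      have h2 := two_le_sum (f := fun s => ∑ a : Fin 3, w (LL P.1 s a))
        (fun s => hμ0 P.1 s) hne2
      rw [← h]
      exact h2.trans (hrow1c P.1)
    · have hne1 : P.1 ≠ Q.1 := fun h1 => hne (Prod.ext h1 h)
      have h2 := two_le_sum (f := fun d => ∑ a : Fin 3, w (LL d P.2 a))
        (fun d => hμ0 d P.2) hne1
      rw [← h]
      exact h2.trans (hrow3c P.2)
    · have hne1 : P.1 ≠ Q.1 := by
        intro h1
        apply hne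
        refine Prod.ext h1 ?_
        have h' := h
        rw [h1] at h'
        exact sub_left_inj.mp h'
      have hP2 : P.2 = (P.2 - P.1) + P.1 := (sub_add_cancel P.2 P.1).symm
      have hQ2 : Q.2 = (P.2 - P.1) + Q.1 := by
        rw [h]; exact (sub_add_cancel Q.2 Q.1).symm
      have h2 := two_le_sum (f := fun d => ∑ a : Fin 3, w (LL d ((P.2 - P.1) + d) a))
        (fun d => hμ0 _ _) hne1
      calc (∑ a : Fin 3, w (LL P.1 P.2 a)) + (∑ a : Fin 3, w (LL Q.1 Q.2 a))
          = (∑ a : Fin 3, w (LL P.1 ((P.2 - P.1) + P.1) a))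
            + (∑ a : Fin 3, w (LL Q.1 ((P.2 - P.1) + Q.1) a)) := by rw [← hP2, ← hQ2]
        _ ≤ ∑ d : Fin 3, ∑ a : Fin 3, w (LL d ((P.2 - P.1) + d) a) := h2
        _ ≤ 1/2 + γ := hrow2c (P.2 - P.1)
  -- main case analysis
  rcases claim_structure lo1 lo2 lo3 with
    ⟨p, q, r, hpq, hpr, hqr, shpq, shpr, shqr, hcover⟩ | ⟨e1, e12, δ, hδ, hcover⟩
  · -- three pairwise-sharing cells: direct contradiction
    have hgood : (∑ x : Fin 3 × Fin 3,
        if Gd lo1 lo2 lo3 x then (∑ a : Fin 3, w (LL x.1 x.2 a)) else 0)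
        ≤ (∑ a : Fin 3, w (LL p.1 p.2 a)) + (∑ a : Fin 3, w (LL q.1 q.2 a))
          + (∑ a : Fin 3, w (LL r.1 r.2 a)) := by
      have hpt : ∀ x : Fin 3 × Fin 3,
          (if Gd lo1 lo2 lo3 x then (∑ a : Fin 3, w (LL x.1 x.2 a)) else 0)
            ≤ (if x = p then (∑ a : Fin 3, w (LL x.1 x.2 a)) else 0)
              + (if x = q then (∑ a : Fin 3, w (LL x.1 x.2 a)) else 0)
              + (if x = r then (∑ a : Fin 3, w (LL x.1 x.2 a)) else 0) := by
        intro x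
        have t1 := hite0 (x = p) inferInstance x.1 x.2
        have t2 := hite0 (x = q) inferInstance x.1 x.2
        have t3 := hite0 (x = r) inferInstance x.1 x.2
        by_cases h : Gd lo1 lo2 lo3 x
        · rw [if_pos h]
          rcases hcover x h with hc | hc | hc
          · rw [if_pos hc]; linarith
          · rw [if_pos hc]; linarith
          · rw [if_pos hc]; linarith
        · rw [if_neg h]; linarith
      calc (∑ x : Fin 3 × Fin 3,
          if Gd lo1 lo2 lo3 x then (∑ a : Fin 3, w (LL x.1 x.2 a)) else 0)
          ≤ ∑ x : Fin 3 × Fin 3,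
              ((if x = p then (∑ a : Fin 3, w (LL x.1 x.2 a)) else 0)
              + (if x = q then (∑ a : Fin 3, w (LL x.1 x.2 a)) else 0)
              + (if x = r then (∑ a : Fin 3, w (LL x.1 x.2 a)) else 0)) :=
            Finset.sum_le_sum fun x _ => hpt x
        _ = (∑ a : Fin 3, w (LL p.1 p.2 a)) + (∑ a : Fin 3, w (LL q.1 q.2 a))
            + (∑ a : Fin 3, w (LL r.1 r.2 a)) := by
            rw [Finset.sum_add_distrib, Finset.sum_add_distrib,
              Finset.sum_ite_eq' univ p (fun x => ∑ a : Fin 3, w (LL x.1 x.2 a)),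
              Finset.sum_ite_eq' univ q (fun x => ∑ a : Fin 3, w (LL x.1 x.2 a)),
              Finset.sum_ite_eq' univ r (fun x => ∑ a : Fin 3, w (LL x.1 x.2 a))]
            simp
    have b1 := hshare p q hpq shpq
    have b2 := hshare p r hpr shpr
    have b3 := hshare q r hqr shqr
    linarith [htotμ, hsplitμ, hbad, hgood, hγ1, hε1]
  · -- two heavy lines
    have hu : Function.Injective (LL e1 e12) := fun a a' h => (LLinj h).2.2
    have hv : Function.Injective (LL (δ + e1) (δ + (δ + e12))) := fun a a' h => (LLinj h).2.2
    have huv : ∀ a b : Fin 3, LL e1 e12 a ≠ LL (δ + e1) (δ + (δ + e12)) b := by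
      intro a b h
      exact hδ (right_eq_add.mp (LLinj h).1)
    have hdisj : Disjoint (univ.image (LL e1 e12))
        (univ.image (LL (δ + e1) (δ + (δ + e12))) : Finset Atom) := by
      rw [Finset.disjoint_left]
      rintro α hα hα'
      simp only [Finset.mem_image] at hα hα'
      obtain ⟨a, -, rfl⟩ := hα
      obtain ⟨b, -, hb⟩ := hα'
      exact huv a b hb.symm
    have hLset : ∑ α ∈ (univ.image (LL e1 e12) ∪ univ.image (LL (δ + e1) (δ + (δ + e12))) : Finset Atom), w α = (∑ a : Fin 3, w (LL e1 e12 a)) + (∑ b : Fin 3, w (LL (δ + e1) (δ + (δ + e12)) b)) := by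
      rw [Finset.sum_union hdisj, Finset.sum_image (fun a _ b _ h => hu h),
        Finset.sum_image (fun a _ b _ h => hv h)]
    have hgood : (∑ x : Fin 3 × Fin 3,
        if Gd lo1 lo2 lo3 x then (∑ a : Fin 3, w (LL x.1 x.2 a)) else 0)
        ≤ (∑ a : Fin 3, w (LL e1 e12 a)) + (∑ b : Fin 3, w (LL (δ + e1) (δ + (δ + e12)) b)) := by
      have hpt : ∀ x : Fin 3 × Fin 3,
          (if Gd lo1 lo2 lo3 x then (∑ a : Fin 3, w (LL x.1 x.2 a)) else 0)
            ≤ (if x = (e1, e12) then (∑ a : Fin 3, w (LL x.1 x.2 a)) else 0)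
              + (if x = (δ + e1, δ + (δ + e12)) then (∑ a : Fin 3, w (LL x.1 x.2 a)) else 0) := by
        intro x
        have t1 := hite0 (x = (e1, e12)) inferInstance x.1 x.2
        have t2 := hite0 (x = (δ + e1, δ + (δ + e12))) inferInstance x.1 x.2
        by_cases h : Gd lo1 lo2 lo3 x
        · rw [if_pos h]
          rcases hcover x h with hc | hc
          · rw [if_pos hc]; linarith
          · rw [if_pos hc]; linarith
        · rw [if_neg h]; linarith
      calc (∑ x : Fin 3 × Fin 3,
            if Gd lo1 lo2 lo3 x then (∑ a : Fin 3, w (LL x.1 x.2 a)) else 0)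
          ≤ ∑ x : Fin 3 × Fin 3,
              ((if x = (e1, e12) then (∑ a : Fin 3, w (LL x.1 x.2 a)) else 0)
              + (if x = (δ + e1, δ + (δ + e12)) then (∑ a : Fin 3, w (LL x.1 x.2 a)) else 0)) :=
            Finset.sum_le_sum fun x _ => hpt x
        _ = (∑ a : Fin 3, w (LL e1 e12 a)) + (∑ b : Fin 3, w (LL (δ + e1) (δ + (δ + e12)) b)) := by
            rw [Finset.sum_add_distrib,
              Finset.sum_ite_eq' univ ((e1, e12) : Fin 3 × Fin 3)
                (fun x => ∑ a : Fin 3, w (LL x.1 x.2 a)),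
              Finset.sum_ite_eq' univ ((δ + e1, δ + (δ + e12)) : Fin 3 × Fin 3)
                (fun x => ∑ a : Fin 3, w (LL x.1 x.2 a))]
            simp
    have hRB : 1 - ((∑ a : Fin 3, w (LL e1 e12 a)) + (∑ b : Fin 3, w (LL (δ + e1) (δ + (δ + e12)) b))) ≤ 3*ε + 21*γ := by
      linarith [htotμ, hsplitμ, hbad, hgood]
    have hfg : ∀ a b : Fin 3,
        w (LL e1 e12 a) + w (LL (δ + e1) (δ + (δ + e12)) b) ≤ 1/2 + γ := by
      intro a b
      rcases z3_cover δ a b hδ with hb | hb | hb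
      · subst hb
        exact (pair_le_marg hw0 (huv b b) (LL0 e1 e12 b)
          (LL0 (δ + e1) (δ + (δ + e12)) b)).trans (hcolor 0 b)
      · subst hb
        have harith : (δ + (δ + e12)) + (δ + a) = e12 + a := by
          have h3 : δ + (δ + δ) = 0 := z3_triple δ
          calc (δ + (δ + e12)) + (δ + a) = (δ + (δ + δ)) + (e12 + a) := by abel
            _ = e12 + a := by rw [h3, zero_add]
        refine (pair_le_marg hw0 (huv a (δ + a)) (LL2 e1 e12 a) ?_).trans (hcolor 2 (e12 + a))
        rw [LL2, harith]
      · subst hb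
        have harith : (δ + e1) + (δ + (δ + a)) = e1 + a := by
          have h3 : δ + (δ + δ) = 0 := z3_triple δ
          calc (δ + e1) + (δ + (δ + a)) = (δ + (δ + δ)) + (e1 + a) := by abel
            _ = e1 + a := by rw [h3, zero_add]
        refine (pair_le_marg hw0 (huv a (δ + (δ + a))) (LL1 e1 e12 a) ?_).trans
          (hcolor 1 (e1 + a))
        rw [LL1, harith]
    have hF_le : (∑ a : Fin 3, w (LL e1 e12 a)) ≤ 1/2 + γ :=
      (line_le hw0 e1 e12).trans (hxle 0 1 h01 _)
    have hG_le : (∑ b : Fin 3, w (LL (δ + e1) (δ + (δ + e12)) b)) ≤ 1/2 + γ :=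
      (line_le hw0 (δ + e1) (δ + (δ + e12))).trans (hxle 0 1 h01 _)
    have hF0 : 0 ≤ (∑ a : Fin 3, w (LL e1 e12 a)) := Finset.sum_nonneg fun a _ => hw0 _
    have hG0 : 0 ≤ (∑ b : Fin 3, w (LL (δ + e1) (δ + (δ + e12)) b)) := Finset.sum_nonneg fun a _ => hw0 _
    have hFG1 : (∑ a : Fin 3, w (LL e1 e12 a)) + (∑ b : Fin 3, w (LL (δ + e1) (δ + (δ + e12)) b)) ≤ 1 := by
      rw [← hLset, ← hsum]
      exact Finset.sum_le_sum_of_subset_of_nonneg (Finset.subset_univ _) (fun t _ _ => hw0 t)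
    obtain ⟨am, -, ham⟩ := Finset.exists_max_image univ (fun a => w (LL e1 e12 a))
      ⟨0, Finset.mem_univ 0⟩
    obtain ⟨bm, -, hbm⟩ := Finset.exists_max_image univ
      (fun b => w (LL (δ + e1) (δ + (δ + e12)) b)) ⟨0, Finset.mem_univ 0⟩
    have hSf : (∑ a : Fin 3, (w (LL e1 e12 a))^2) ≤ (∑ a : Fin 3, w (LL e1 e12 a)) * w (LL e1 e12 am) := by
      rw [Finset.sum_mul]
      refine Finset.sum_le_sum fun a _ => ?_
      rw [pow_two]
      exact mul_le_mul_of_nonneg_left (ham a (Finset.mem_univ a)) (hw0 _)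
    have hSg : (∑ b : Fin 3, (w (LL (δ + e1) (δ + (δ + e12)) b))^2) ≤ (∑ b : Fin 3, w (LL (δ + e1) (δ + (δ + e12)) b)) * w (LL (δ + e1) (δ + (δ + e12)) bm) := by
      rw [Finset.sum_mul]
      refine Finset.sum_le_sum fun b _ => ?_
      rw [pow_two]
      exact mul_le_mul_of_nonneg_left (hbm b (Finset.mem_univ b)) (hw0 _)
    have hquad1 := quad_generic w (LL e1 e12) (LL (δ + e1) (δ + (δ + e12))) hu hv huv 0 1
      (fun a => a) (fun a => e1 + a) (fun b => b) (fun b => (δ + e1) + b)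
      Function.injective_id (add_right_injective e1) Function.injective_id
      (add_right_injective (δ + e1))
      (fun a => LL0 e1 e12 a) (fun a => LL1 e1 e12 a)
      (fun b => LL0 (δ + e1) (δ + (δ + e12)) b) (fun b => LL1 (δ + e1) (δ + (δ + e12)) b)
      (fun a => δ + a) (fun a b => crossN01 δ e1 a b hδ)
    have hquad2 := quad_generic w (LL e1 e12) (LL (δ + e1) (δ + (δ + e12))) hu hv huv 1 2
      (fun a => e1 + a) (fun a => e12 + a) (fun b => (δ + e1) + b)
      (fun b => (δ + (δ + e12)) + b)
      (add_right_injective e1) (add_right_injective e12) (add_right_injective (δ + e1))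
      (add_right_injective (δ + (δ + e12)))
      (fun a => LL1 e1 e12 a) (fun a => LL2 e1 e12 a)
      (fun b => LL1 (δ + e1) (δ + (δ + e12)) b) (fun b => LL2 (δ + e1) (δ + (δ + e12)) b)
      (fun a => a) (fun a b => crossN12 δ e1 e12 a b hδ)
    have hquad3 := quad_generic w (LL e1 e12) (LL (δ + e1) (δ + (δ + e12))) hu hv huv 0 2
      (fun a => a) (fun a => e12 + a) (fun b => b) (fun b => (δ + (δ + e12)) + b)
      Function.injective_id (add_right_injective e12) Function.injective_id
      (add_right_injective (δ + (δ + e12)))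
      (fun a => LL0 e1 e12 a) (fun a => LL2 e1 e12 a)
      (fun b => LL0 (δ + e1) (δ + (δ + e12)) b) (fun b => LL2 (δ + e1) (δ + (δ + e12)) b)
      (fun a => δ + (δ + a)) (fun a b => crossN02 δ e12 a b hδ)
    have hcross_total :
        (∑ a : Fin 3, w (LL e1 e12 a) * w (LL (δ + e1) (δ + (δ + e12)) (δ + a)))
        + (∑ a : Fin 3, w (LL e1 e12 a) * w (LL (δ + e1) (δ + (δ + e12)) a))
        + (∑ a : Fin 3, w (LL e1 e12 a) * w (LL (δ + e1) (δ + (δ + e12)) (δ + (δ + a))))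
        = (∑ a : Fin 3, w (LL e1 e12 a)) * (∑ b : Fin 3, w (LL (δ + e1) (δ + (δ + e12)) b)) := by
      rw [← Finset.sum_add_distrib, ← Finset.sum_add_distrib, Finset.sum_mul]
      refine Finset.sum_congr rfl fun a _ => ?_
      rw [← sum_g_shift (fun b => w (LL (δ + e1) (δ + (δ + e12)) b)) δ a hδ]
      ring
    have hfiltnot : ∀ (i j : Fin 3) (π : Equiv.Perm (Fin 3)),
        (Spair i j π).filter (fun α => ¬ (α ∈ (univ.image (LL e1 e12) ∪ univ.image (LL (δ + e1) (δ + (δ + e12))) : Finset Atom)))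
        = univ.filter (fun α => α ∈ Spair i j π ∧ α ∉ (univ.image (LL e1 e12) ∪ univ.image (LL (δ + e1) (δ + (δ + e12))) : Finset Atom)) := by
      intro i j π
      ext α
      simp only [Finset.mem_filter, Finset.mem_univ, true_and]
    have hperpair : ∀ (i j : Fin 3), i < j →
        1 - γ ≤ (∑ π : Equiv.Perm (Fin 3),
          (∑ α ∈ (Spair i j π).filter (· ∈ (univ.image (LL e1 e12) ∪ univ.image (LL (δ + e1) (δ + (δ + e12))) : Finset Atom)), w α)^2)
          + (2*(1/2+γ)) * (2*(1 - ((∑ a : Fin 3, w (LL e1 e12 a)) + (∑ b : Fin 3, w (LL (δ + e1) (δ + (δ + e12)) b))))) := by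
      intro i j hij
      have hr1 : ∑ π : Equiv.Perm (Fin 3), (∑ α ∈ univ.filter (fun α => α ∈ Spair i j π
          ∧ α ∉ (univ.image (LL e1 e12) ∪ univ.image (LL (δ + e1) (δ + (δ + e12))) : Finset Atom)), w α)
          ≤ 2*(1 - ((∑ a : Fin 3, w (LL e1 e12 a)) + (∑ b : Fin 3, w (LL (δ + e1) (δ + (δ + e12)) b)))) := by
        have hr := rsum hw0 hsum i j (univ.image (LL e1 e12) ∪ univ.image (LL (δ + e1) (δ + (δ + e12))) : Finset Atom)
        rw [hLset] at hr
        exact hr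
      have hterm : ∀ π : Equiv.Perm (Fin 3), (∑ α ∈ Spair i j π, w α)^2
          ≤ (∑ α ∈ (Spair i j π).filter (· ∈ (univ.image (LL e1 e12) ∪ univ.image (LL (δ + e1) (δ + (δ + e12))) : Finset Atom)), w α)^2
            + (2*(1/2+γ)) * (∑ α ∈ univ.filter (fun α => α ∈ Spair i j π
              ∧ α ∉ (univ.image (LL e1 e12) ∪ univ.image (LL (δ + e1) (δ + (δ + e12))) : Finset Atom)), w α) := by
        intro π
        refine step_sq ?_ (Finset.sum_nonneg fun α _ => hw0 α)
          (Finset.sum_nonneg fun α _ => hw0 α) (hxle i j hij π)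
        rw [← hfiltnot i j π]
        exact Finset.sum_filter_add_sum_filter_not _ _ w
      calc 1 - γ ≤ ∑ π : Equiv.Perm (Fin 3), (∑ α ∈ Spair i j π, w α)^2 := hpair i j hij
        _ ≤ ∑ π : Equiv.Perm (Fin 3), ((∑ α ∈ (Spair i j π).filter (· ∈ (univ.image (LL e1 e12) ∪ univ.image (LL (δ + e1) (δ + (δ + e12))) : Finset Atom)), w α)^2
              + (2*(1/2+γ)) * (∑ α ∈ univ.filter (fun α => α ∈ Spair i j π
                ∧ α ∉ (univ.image (LL e1 e12) ∪ univ.image (LL (δ + e1) (δ + (δ + e12))) : Finset Atom)), w α)) :=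
            Finset.sum_le_sum fun π _ => hterm π
        _ = (∑ π : Equiv.Perm (Fin 3),
              (∑ α ∈ (Spair i j π).filter (· ∈ (univ.image (LL e1 e12) ∪ univ.image (LL (δ + e1) (δ + (δ + e12))) : Finset Atom)), w α)^2)
            + (2*(1/2+γ)) * (∑ π : Equiv.Perm (Fin 3),
              (∑ α ∈ univ.filter (fun α => α ∈ Spair i j π ∧ α ∉ (univ.image (LL e1 e12) ∪ univ.image (LL (δ + e1) (δ + (δ + e12))) : Finset Atom)), w α)) := by
            rw [Finset.sum_add_distrib, ← Finset.mul_sum]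
        _ ≤ _ := by
            have hmul := mul_le_mul_of_nonneg_left hr1 (by linarith : (0:ℝ) ≤ 2*(1/2+γ))
            linarith
    have hin1 := hperpair 0 1 h01
    have hin2 := hperpair 1 2 h12
    have hin3 := hperpair 0 2 h02
    rw [hquad1] at hin1
    rw [hquad2] at hin2
    rw [hquad3] at hin3
    have hMf0 : 0 ≤ w (LL e1 e12 am) := hw0 _
    have hMg0 : 0 ≤ w (LL (δ + e1) (δ + (δ + e12)) bm) := hw0 _
    have hMfg := hfg am bm
    exact final_numeric hγ0 hγ1 hε0 hε1 hin1 hin2 hin3 hcross_total hSf hSg hMf0 hMg0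
      hMfg hF_le hG_le hF0 hG0 hFG1 hRB
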